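/- In ℝ³, no family of at most 4 subspaces allows phase retrieval. Equivalently, for any subspaces W₁,...,W_N of ℝ³ with N ≤ 4 and orthogonal projections P_n, there exist x, y ∈ ℝ³ with x ≠ ±y and ‖P_n x‖ = ‖P_n y‖ for all n. -/

import Mathlib

open scoped RealInnerProductSpace

noncomputable section
namespace Stmt13

abbrev V := EuclideanSpace ℝ (Fin 3)

def e (i : Fin 3) : V := EuclideanSpace.single i 1

lemma sum_e (x : V) : x = ∑ i, x i • e i := by
  ext j
  rw [WithLp.ofLp_sum, Finset.sum_apply]
  simp [e, EuclideanSpace.single_apply]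

lemma inner_proj (K : Submodule ℝ V) (x : V) :
    ⟪x, (K.orthogonalProjectionOnto x : V)⟫ = ‖K.orthogonalProjectionOnto x‖ ^ 2 := by
  have h0 : ⟪x - (K.orthogonalProjectionOnto x : V), (K.orthogonalProjectionOnto x : V)⟫ = 0 :=
    Submodule.starProjection_inner_eq_zero x _ (K.orthogonalProjectionOnto x).2
  rw [inner_sub_left, sub_eq_zero] at h0
  rw [h0, real_inner_self_eq_norm_sq, Submodule.norm_coe]

lemma norm_proj_sq (K : Submodule ℝ V) (x : V) :
    ‖K.orthogonalProjectionOnto x‖ ^ 2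
      = ∑ i, ∑ j, x i * x j * ⟪e i, (K.orthogonalProjectionOnto (e j) : V)⟫ := by
  rw [← inner_proj]
  conv_lhs => rw [sum_e x]
  rw [sum_inner]
  refine Finset.sum_congr rfl fun i _ => ?_
  rw [real_inner_smul_left]
  have : (K.orthogonalProjectionOnto (∑ j, x j • e j) : V)
      = ∑ j, x j • (K.orthogonalProjectionOnto (e j) : V) := by
    rw [map_sum]
    push_cast
    simp
  rw [this, inner_sum]
  rw [Finset.mul_sum]
  refine Finset.sum_congr rfl fun j _ => ?_
  rw [real_inner_smul_right]
  ring


abbrev I := {p : Fin 3 × Fin 3 // p.1 ≤ p.2}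

lemma card_I : Fintype.card I = 6 := by decide

def phi : (I → ℝ) →ₗ[ℝ] Matrix (Fin 3) (Fin 3) ℝ where
  toFun f := Matrix.of fun i j =>
    if h : i ≤ j then f ⟨(i, j), h⟩ else f ⟨(j, i), le_of_not_ge h⟩
  map_add' f g := by
    ext i j
    by_cases h : i ≤ j <;> simp [h]
  map_smul' c f := by
    ext i j
    by_cases h : i ≤ j <;> simp [h]

lemma phi_apply (f : I → ℝ) (p : I) : phi f p.1.1 p.1.2 = f p := by
  obtain ⟨⟨i, j⟩, h⟩ := p
  simp [phi, dif_pos h]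

lemma phi_inj (f : I → ℝ) (hf : phi f = 0) : f = 0 := by
  funext p
  have := phi_apply f p
  rw [hf] at this
  simpa using this.symm

lemma phi_symm (f : I → ℝ) (i j : Fin 3) : phi f j i = phi f i j := by
  rcases le_or_gt i j with h | h
  · rcases eq_or_lt_of_le h with rfl | h'
    · rfl
    · show dite _ _ _ = dite _ _ _
      rw [dif_neg (not_le.2 h'), dif_pos h]
  · show dite _ _ _ = dite _ _ _
    rw [dif_pos h.le, dif_neg (not_le.2 h)]

variable {N : ℕ}

def psi (c : Fin N → Fin 3 → Fin 3 → ℝ) : Matrix (Fin 3) (Fin 3) ℝ →ₗ[ℝ] (Fin N → ℝ) where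
  toFun M := fun n => ∑ i, ∑ j, M i j * c n i j
  map_add' M M' := by
    funext n
    simp [Matrix.add_apply, add_mul, Finset.sum_add_distrib]
  map_smul' r M := by
    funext n
    simp [Matrix.smul_apply, Finset.mul_sum, mul_assoc]

lemma exists_kernel_pair (hN : N ≤ 4) (c : Fin N → Fin 3 → Fin 3 → ℝ) :
    ∃ a b : I → ℝ, a ≠ 0 ∧ b ∉ Submodule.span ℝ {a} ∧
      (psi c) (phi a) = 0 ∧ (psi c) (phi b) = 0 := by
  set T := (psi c).comp phi with hT
  have hrk : Module.finrank ℝ (LinearMap.range T) + Module.finrank ℝ (LinearMap.ker T)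
      = Module.finrank ℝ (I → ℝ) := T.finrank_range_add_finrank_ker
  have hdom : Module.finrank ℝ (I → ℝ) = 6 := by
    rw [Module.finrank_pi, card_I]
  have hrange : Module.finrank ℝ (LinearMap.range T) ≤ 4 := by
    calc Module.finrank ℝ (LinearMap.range T) ≤ Module.finrank ℝ (Fin N → ℝ) :=
          Submodule.finrank_le _
    _ = N := by rw [Module.finrank_pi, Fintype.card_fin]
    _ ≤ 4 := hN
  have hker : 2 ≤ Module.finrank ℝ (LinearMap.ker T) := by omega
  -- a nonzero element of the kernel
  have hkerbot : LinearMap.ker T ≠ ⊥ := by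
    intro h
    rw [h, finrank_bot] at hker
    omega
  obtain ⟨a, ha, ha0⟩ := Submodule.exists_mem_ne_zero_of_ne_bot hkerbot
  have hnotle : ¬ LinearMap.ker T ≤ Submodule.span ℝ {a} := by
    intro hle
    have := Submodule.finrank_mono hle
    rw [finrank_span_singleton ha0] at this
    omega
  obtain ⟨b, hb, hb'⟩ := SetLike.not_le_iff_exists.mp hnotle
  exact ⟨a, b, ha0, hb', ha, hb⟩


lemma exists_singular (hN : N ≤ 4) (c : Fin N → Fin 3 → Fin 3 → ℝ) :
    ∃ M : Matrix (Fin 3) (Fin 3) ℝ, M ≠ 0 ∧ M.IsHermitian ∧ M.det = 0 ∧ psi c M = 0 := by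
  obtain ⟨a, b, ha0, hb, hka, hkb⟩ := exists_kernel_pair hN c
  set f : ℝ → ℝ := fun t => (phi (Real.cos t • a + Real.sin t • b)).det with hf
  have hcont : Continuous f := by
    apply Continuous.matrix_det
    exact phi.toContinuousLinearMap.continuous.comp
      ((Real.continuous_cos.smul continuous_const).add
        (Real.continuous_sin.smul continuous_const))
  have hf0 : f 0 = (phi a).det := by simp [hf]
  have hfpi : f Real.pi = -(phi a).det := by
    simp only [hf, Real.cos_pi, Real.sin_pi, zero_smul, add_zero, neg_one_smul, map_neg,
      Matrix.det_neg, Fintype.card_fin]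
    ring
  have hpi : (0:ℝ) ≤ Real.pi := Real.pi_pos.le
  have : ∃ t, f t = 0 := by
    rcases le_total ((phi a).det) 0 with h | h
    · have h0 : (0:ℝ) ∈ Set.Icc (f 0) (f Real.pi) := by
        rw [hf0, hfpi]; constructor <;> linarith
      obtain ⟨t, _, ht⟩ := intermediate_value_Icc hpi hcont.continuousOn h0
      exact ⟨t, ht⟩
    · have h0 : (0:ℝ) ∈ Set.Icc (f Real.pi) (f 0) := by
        rw [hf0, hfpi]; constructor <;> linarith
      obtain ⟨t, _, ht⟩ := intermediate_value_Icc' hpi hcont.continuousOn h0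
      exact ⟨t, ht⟩
  obtain ⟨t, ht⟩ := this
  refine ⟨phi (Real.cos t • a + Real.sin t • b), ?_, ?_, ht, ?_⟩
  · intro h
    have hz : Real.cos t • a + Real.sin t • b = 0 := phi_inj _ h
    by_cases hs : Real.sin t = 0
    · have hc : Real.cos t ≠ 0 := by
        intro hc
        have := Real.sin_sq_add_cos_sq t
        rw [hs, hc] at this; norm_num at this
      rw [hs, zero_smul, add_zero, smul_eq_zero] at hz
      exact ha0 (hz.resolve_left hc)
    · apply hb
      have h1 : Real.sin t • b = -(Real.cos t • a) := by
        rw [eq_neg_iff_add_eq_zero, add_comm]; exact hz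
      rw [Submodule.mem_span_singleton]
      refine ⟨(Real.sin t)⁻¹ * (-(Real.cos t)), ?_⟩
      rw [← smul_smul, neg_smul, ← h1, smul_smul, inv_mul_cancel₀ hs, one_smul]
  · show _ = _
    ext i j
    simp only [Matrix.conjTranspose_apply, star_trivial]
    exact phi_symm _ i j
  · rw [map_add, map_smul, map_smul, map_add, map_smul, map_smul, hka, hkb,
      smul_zero, smul_zero, add_zero]


lemma entry_eq (M : Matrix (Fin 3) (Fin 3) ℝ) (hH : M.IsHermitian) (i j : Fin 3) :
    M i j = ∑ k, hH.eigenvalues k * (hH.eigenvectorBasis k i * hH.eigenvectorBasis k j) := by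
  conv_lhs => rw [hH.spectral_theorem, Unitary.conjStarAlgAut_apply]
  rw [Matrix.mul_apply]
  refine Finset.sum_congr rfl fun k _ => ?_
  rw [Matrix.mul_diagonal]
  simp only [Matrix.star_apply, star_trivial, Matrix.IsHermitian.eigenvectorUnitary_apply,
    Function.comp_apply, RCLike.ofReal_real_eq_id, id_eq]
  ring

theorem main (N : ℕ) (hN : N ≤ 4) (W : Fin N → Submodule ℝ V) :
    ∃ x y : V, x ≠ y ∧ x ≠ -y ∧
      ∀ n, ‖(W n).orthogonalProjectionOnto x‖ = ‖(W n).orthogonalProjectionOnto y‖ := by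
  set c : Fin N → Fin 3 → Fin 3 → ℝ :=
    fun n i j => ⟪e i, ((W n).orthogonalProjectionOnto (e j) : V)⟫ with hc
  obtain ⟨M, hM0, hH, hdet, hpsi⟩ := exists_singular hN c
  set lam : Fin 3 → ℝ := hH.eigenvalues with hlam
  set v : Fin 3 → V := fun k => hH.eigenvectorBasis k with hv
  have hO := hH.eigenvectorBasis.orthonormal
  have hentry : ∀ i j, M i j = ∑ k, lam k * (v k i * v k j) := entry_eq M hH
  have hnorm : ∀ (n) (x : V),
      ‖(W n).orthogonalProjectionOnto x‖ ^ 2 = ∑ i, ∑ j, x i * x j * c n i j :=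
    fun n x => norm_proj_sq (W n) x
  have hkey : ∀ n, ∑ k, lam k * ‖(W n).orthogonalProjectionOnto (v k)‖ ^ 2 = 0 := by
    intro n
    have h1 : (psi c) M n = 0 := by rw [hpsi]; rfl
    calc ∑ k, lam k * ‖(W n).orthogonalProjectionOnto (v k)‖ ^ 2
        = ∑ k, ∑ i, ∑ j, lam k * (v k i * v k j) * c n i j := by
          refine Finset.sum_congr rfl fun k _ => ?_
          rw [hnorm, Finset.mul_sum]
          refine Finset.sum_congr rfl fun i _ => ?_
          rw [Finset.mul_sum]
          exact Finset.sum_congr rfl fun j _ => by ring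
      _ = ∑ i, ∑ j, (∑ k, lam k * (v k i * v k j)) * c n i j := by
          rw [Finset.sum_comm]
          refine Finset.sum_congr rfl fun i _ => ?_
          rw [Finset.sum_comm]
          exact Finset.sum_congr rfl fun j _ => by rw [Finset.sum_mul]
      _ = ∑ i, ∑ j, M i j * c n i j := by
          refine Finset.sum_congr rfl fun i _ => Finset.sum_congr rfl fun j _ => ?_
          rw [← hentry]
      _ = 0 := h1
  have hex : ∃ j, lam j ≠ 0 := by
    by_contra h
    push_neg at h
    apply hM0
    ext i j
    rw [hentry]
    simp [h]
  have hzero : ∃ k0, lam k0 = 0 := by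
    have hd := hH.det_eq_prod_eigenvalues
    rw [hdet] at hd
    obtain ⟨k0, _, hk0⟩ := Finset.prod_eq_zero_iff.mp hd.symm
    exact ⟨k0, hk0⟩
  have hnormv : ∀ k, ‖v k‖ = 1 := fun k => hO.1 k
  -- helper for the "all same sign" cases
  have same_sign : ∀ j, lam j ≠ 0 → (∀ n, ‖(W n).orthogonalProjectionOnto (v j)‖ = 0) →
      ∃ x y : V, x ≠ y ∧ x ≠ -y ∧
        ∀ n, ‖(W n).orthogonalProjectionOnto x‖ = ‖(W n).orthogonalProjectionOnto y‖ := by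
    intro j _ hzero'
    refine ⟨v j, 0, ?_, ?_, ?_⟩
    · intro h
      have := hnormv j
      rw [h, norm_zero] at this
      norm_num at this
    · intro h
      have := hnormv j
      rw [h, neg_zero, norm_zero] at this
      norm_num at this
    · intro n
      rw [hzero' n, map_zero, norm_zero]
  by_cases hp : ∃ p, 0 < lam p
  · by_cases hr : ∃ r, lam r < 0
    · -- mixed signs
      obtain ⟨p, hp'⟩ := hp
      obtain ⟨r, hr'⟩ := hr
      obtain ⟨k0, hk0⟩ := hzero
      have hpr : p ≠ r := fun h => by rw [h] at hp'; linarith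
      have hpk : p ≠ k0 := fun h => by rw [h, hk0] at hp'; linarith
      have hrk : r ≠ k0 := fun h => by rw [h, hk0] at hr'; linarith
      have huniv : (Finset.univ : Finset (Fin 3)) = {p, r, k0} := by
        symm
        apply Finset.eq_univ_of_card
        rw [Finset.card_insert_of_notMem (by simp [hpr, hpk]),
          Finset.card_insert_of_notMem (by simp [hrk]), Finset.card_singleton]
        rfl
      have hsum : ∀ n, lam p * ‖(W n).orthogonalProjectionOnto (v p)‖ ^ 2
          + lam r * ‖(W n).orthogonalProjectionOnto (v r)‖ ^ 2 = 0 := by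
        intro n
        have := hkey n
        rw [huniv, Finset.sum_insert (by simp [hpr, hpk]),
          Finset.sum_insert (by simp [hrk]), Finset.sum_singleton, hk0, zero_mul,
          add_zero] at this
        linarith [this]
      refine ⟨Real.sqrt (lam p) • v p, Real.sqrt (-(lam r)) • v r, ?_, ?_, ?_⟩
      all_goals
        have hinner : ⟪Real.sqrt (lam p) • v p, Real.sqrt (-(lam r)) • v r⟫ = 0 := by
          rw [real_inner_smul_left, real_inner_smul_right, hO.2 hpr, mul_zero, mul_zero]
        have hxnorm : ‖Real.sqrt (lam p) • v p‖ ≠ 0 := by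
          rw [norm_smul, hnormv p, mul_one, Real.norm_eq_abs,
            abs_of_nonneg (Real.sqrt_nonneg _)]
          exact ne_of_gt (Real.sqrt_pos.mpr hp')
      · intro h
        rw [← h] at hinner
        have hx0 : Real.sqrt (lam p) • v p = 0 := by
          rwa [inner_self_eq_zero] at hinner
        exact hxnorm (by rw [hx0, norm_zero])
      · intro h
        have h2 : ⟪Real.sqrt (lam p) • v p, Real.sqrt (lam p) • v p⟫ = (0:ℝ) := by
          nth_rewrite 2 [h]
          rw [inner_neg_right, hinner, neg_zero]
        have hx0 : Real.sqrt (lam p) • v p = 0 := by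
          rwa [inner_self_eq_zero] at h2
        exact hxnorm (by rw [hx0, norm_zero])
      · intro n
        have e1 : ‖(W n).orthogonalProjectionOnto (Real.sqrt (lam p) • v p)‖
            = Real.sqrt (lam p) * ‖(W n).orthogonalProjectionOnto (v p)‖ := by
          rw [map_smul, norm_smul, Real.norm_eq_abs, abs_of_nonneg (Real.sqrt_nonneg _)]
        have e2 : ‖(W n).orthogonalProjectionOnto (Real.sqrt (-(lam r)) • v r)‖
            = Real.sqrt (-(lam r)) * ‖(W n).orthogonalProjectionOnto (v r)‖ := by
          rw [map_smul, norm_smul, Real.norm_eq_abs, abs_of_nonneg (Real.sqrt_nonneg _)]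
        rw [e1, e2]
        have hs := hsum n
        have h1 : 0 ≤ Real.sqrt (lam p) * ‖(W n).orthogonalProjectionOnto (v p)‖ :=
          mul_nonneg (Real.sqrt_nonneg _) (norm_nonneg _)
        have h2 : 0 ≤ Real.sqrt (-(lam r)) * ‖(W n).orthogonalProjectionOnto (v r)‖ :=
          mul_nonneg (Real.sqrt_nonneg _) (norm_nonneg _)
        have hsq : (Real.sqrt (lam p) * ‖(W n).orthogonalProjectionOnto (v p)‖) ^ 2
            = (Real.sqrt (-(lam r)) * ‖(W n).orthogonalProjectionOnto (v r)‖) ^ 2 := by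
          rw [mul_pow, mul_pow, Real.sq_sqrt hp'.le, Real.sq_sqrt (by linarith)]
          linarith [hs]
        rw [← Real.sqrt_sq h1, ← Real.sqrt_sq h2, hsq]
    · -- all eigenvalues nonneg
      push_neg at hr
      obtain ⟨p, hp'⟩ := hp
      apply same_sign p (ne_of_gt hp')
      intro n
      have h0 : ∀ k ∈ Finset.univ, (0:ℝ) ≤ lam k * ‖(W n).orthogonalProjectionOnto (v k)‖ ^ 2 :=
        fun k _ => mul_nonneg (hr k) (by positivity)
      have := (Finset.sum_eq_zero_iff_of_nonneg h0).mp (hkey n) p (Finset.mem_univ p)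
      have h2 : ‖(W n).orthogonalProjectionOnto (v p)‖ ^ 2 = 0 := by
        rcases mul_eq_zero.mp this with h | h
        · exact absurd h (ne_of_gt hp')
        · exact h
      exact pow_eq_zero_iff (by norm_num) |>.mp h2
  · -- all eigenvalues nonpos
    push_neg at hp
    obtain ⟨j, hj⟩ := hex
    apply same_sign j hj
    intro n
    have h0 : ∀ k ∈ Finset.univ, lam k * ‖(W n).orthogonalProjectionOnto (v k)‖ ^ 2 ≤ 0 :=
      fun k _ => mul_nonpos_iff.mpr (Or.inr ⟨hp k, by positivity⟩)
    have := (Finset.sum_eq_zero_iff_of_nonpos h0).mp (hkey n) j (Finset.mem_univ j)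
    have h2 : ‖(W n).orthogonalProjectionOnto (v j)‖ ^ 2 = 0 := by
      rcases mul_eq_zero.mp this with h | h
      · exact absurd h hj
      · exact h
    exact pow_eq_zero_iff (by norm_num) |>.mp h2

end Stmt13
end

/-- In ℝ³, no family of at most 4 subspaces allows phase retrieval. -/
theorem stmt_13 (N : ℕ) (hN : N ≤ 4) (W : Fin N → Submodule ℝ (EuclideanSpace ℝ (Fin 3))) :
    ∃ x y : EuclideanSpace ℝ (Fin 3), x ≠ y ∧ x ≠ -y ∧
      ∀ n, ‖(W n).orthogonalProjectionOnto x‖ = ‖(W n).orthogonalProjectionOnto y‖ := by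
  exact Stmt13.main N hN W
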